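/- Let c > 0, p > 0 and σ² > 0. The function η ↦ (√p · c/√η − 1)² + σ²/η on (0, ∞) attains its global minimum at η* = ((σ² + p c²)/(√p · c))², and the minimum value equals σ²/(σ² + p c²). (eq. (34) and the resulting objective (37)) -/

import Mathlib

/-- **eq. (34) and objective (37).** For `c > 0`, `p > 0`, `σ² > 0`,
the function `η ↦ (√p·c/√η − 1)² + σ²/η` on `(0, ∞)` attains its global minimum
at `η* = ((σ² + pc²)/(√p·c))²`, with minimum value `σ²/(σ² + pc²)`. -/
theorem stmt16
    (c p σ2 : ℝ) (hc : 0 < c) (hp : 0 < p) (hσ2 : 0 < σ2)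
    (f : ℝ → ℝ)
    (hf : ∀ η, f η = (Real.sqrt p * c / Real.sqrt η - 1) ^ 2 + σ2 / η) :
    f (((σ2 + p * c ^ 2) / (Real.sqrt p * c)) ^ 2) = σ2 / (σ2 + p * c ^ 2) ∧
    (∀ η, 0 < η → f (((σ2 + p * c ^ 2) / (Real.sqrt p * c)) ^ 2) ≤ f η) := by
  set s := Real.sqrt p * c with hsdef
  have hs : 0 < s := mul_pos (Real.sqrt_pos.mpr hp) hc
  have hs2 : s ^ 2 = p * c ^ 2 := by
    rw [hsdef, mul_pow, Real.sq_sqrt hp.le]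
  have hA : 0 < σ2 + p * c ^ 2 := by positivity
  have hsq : Real.sqrt (((σ2 + p * c ^ 2) / s) ^ 2) = (σ2 + p * c ^ 2) / s := by
    rw [Real.sqrt_sq (by positivity)]
  have hmin : f (((σ2 + p * c ^ 2) / s) ^ 2) = σ2 / (σ2 + p * c ^ 2) := by
    rw [hf, hsq]
    have hss : s * s = p * c ^ 2 := by rw [← hs2]; ring
    field_simp
    rw [hs2]; ring
  refine ⟨hmin, fun η hη => ?_⟩
  rw [hmin, hf]
  set r := Real.sqrt η with hrdef
  have hr : 0 < r := Real.sqrt_pos.mpr hη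
  have hr2 : r ^ 2 = η := Real.sq_sqrt hη.le
  rw [← hr2]
  rw [div_le_iff₀ hA]
  have key : ((s / r - 1) ^ 2 + σ2 / r ^ 2) * (σ2 + p * c ^ 2) - σ2
      = ((σ2 + p * c ^ 2) - s * r) ^ 2 / r ^ 2 := by
    field_simp
    nlinarith [hs2]
  nlinarith [key, sq_nonneg ((σ2 + p * c ^ 2) - s * r), sq_nonneg r,
    div_nonneg (sq_nonneg ((σ2 + p * c ^ 2) - s * r)) (sq_nonneg r)]
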